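/- Fix positive reals B and k_1, and define Φ : ℝ^4 → ℝ^4 by Φ(α, K_M1, A, k_4) = (a, b, c, d) with a = −(α−1), b = −K_M1(α−1) + A(α−2), c = K_M1 A (α−2) + A^2 − B k_1^{-1} k_4, d = K_M1 A^2. Then at every point (α, K_M1, A, k_4) with α > 2, K_M1 > 0 and A > 0, the (Fréchet) derivative of Φ is an invertible linear map; in particular the Jacobian determinant of Φ is nonzero there. -/

import Mathlib

set_option maxHeartbeats 1000000

/-- The map from the parameters `(α, K_M1, A, k₄)` to the coefficients `(a, b, c, d)` of the
steady-state cubic, namely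
`a = −(α−1)`, `b = −K_M1(α−1) + A(α−2)`, `c = K_M1 A(α−2) + A² − B k₁⁻¹ k₄`, `d = K_M1 A²`,
has invertible derivative at every point with `α > 2`, `K_M1 > 0`, `A > 0`. -/

theorem coefficient_map_derivative_invertible
    (B k1 : ℝ) (hB : 0 < B) (hk1 : 0 < k1) :
    ∀ α KM1 A k4 : ℝ, 2 < α → 0 < KM1 → 0 < A →
      ∃ L : (ℝ × ℝ × ℝ × ℝ) ≃L[ℝ] (ℝ × ℝ × ℝ × ℝ),
        HasFDerivAt
          (fun p : ℝ × ℝ × ℝ × ℝ =>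
            ((-(p.1 - 1) : ℝ),
             (-(p.2.1 * (p.1 - 1)) + p.2.2.1 * (p.1 - 2) : ℝ),
             (p.2.1 * p.2.2.1 * (p.1 - 2) + p.2.2.1 ^ 2 - B * k1⁻¹ * p.2.2.2 : ℝ),
             (p.2.1 * p.2.2.1 ^ 2 : ℝ)))
          (L : (ℝ × ℝ × ℝ × ℝ) →L[ℝ] (ℝ × ℝ × ℝ × ℝ)) (α, KM1, A, k4) := by
  intro α KM1 A k4 hα hK hA
  -- the Jacobian as a linear map
  set Jlin : (ℝ × ℝ × ℝ × ℝ) →ₗ[ℝ] (ℝ × ℝ × ℝ × ℝ) :=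
  { toFun := fun v =>
      (-v.1,
       (A - KM1) * v.1 - (α - 1) * v.2.1 + (α - 2) * v.2.2.1,
       KM1 * A * v.1 + A * (α - 2) * v.2.1 + (KM1 * (α - 2) + 2 * A) * v.2.2.1
         - B * k1⁻¹ * v.2.2.2,
       A ^ 2 * v.2.1 + 2 * KM1 * A * v.2.2.1)
    map_add' := by
      intro x y
      simp only [Prod.fst_add, Prod.snd_add, Prod.mk_add_mk, Prod.mk.injEq]
      refine ⟨by ring, by ring, by ring, by ring⟩
    map_smul' := by
      intro c x
      simp only [Prod.smul_fst, Prod.smul_snd, Prod.smul_mk, smul_eq_mul,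
        RingHom.id_apply, Prod.mk.injEq]
      refine ⟨by ring, by ring, by ring, by ring⟩ } with hJdef
  have hinj : Function.Injective Jlin := by
    rw [← LinearMap.ker_eq_bot, LinearMap.ker_eq_bot']
    intro v hv
    obtain ⟨v1, v2, v3, v4⟩ := v
    simp only [hJdef, LinearMap.coe_mk, AddHom.coe_mk, Prod.mk.injEq, Prod.mk_eq_zero] at hv ⊢
    obtain ⟨h1, h2, h3, h4⟩ := hv
    have hv1 : v1 = 0 := by linarith
    subst hv1
    have hc : 0 < 2 * KM1 * A * (α - 1) + A ^ 2 * (α - 2) := by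
      have h5 := mul_pos (mul_pos (mul_pos two_pos hK) hA)
        (by linarith : (0:ℝ) < α - 1)
      have h6 := mul_pos (pow_pos hA 2) (by linarith : (0:ℝ) < α - 2)
      linarith
    have hv3 : v3 = 0 := by
      have : (2 * KM1 * A * (α - 1) + A ^ 2 * (α - 2)) * v3 = 0 := by nlinarith
      exact by
        rcases mul_eq_zero.mp this with h | h
        · exact absurd h (ne_of_gt hc)
        · exact h
    subst hv3
    have hv2 : v2 = 0 := by
      have hA2 : A ^ 2 ≠ 0 := by positivity
      have : A ^ 2 * v2 = 0 := by linarith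
      exact (mul_eq_zero.mp this).resolve_left hA2
    subst hv2
    have hv4 : v4 = 0 := by
      have hBk : B * k1⁻¹ ≠ 0 := by positivity
      have : B * k1⁻¹ * v4 = 0 := by linarith
      exact (mul_eq_zero.mp this).resolve_left hBk
    exact ⟨rfl, rfl, rfl, hv4⟩
  let e : (ℝ × ℝ × ℝ × ℝ) ≃ₗ[ℝ] (ℝ × ℝ × ℝ × ℝ) := LinearEquiv.ofInjectiveEndo Jlin hinj
  refine ⟨e.toContinuousLinearEquiv, ?_⟩
  -- derivatives of coordinates
  set p : ℝ × ℝ × ℝ × ℝ := (α, KM1, A, k4) with hp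
  have hx1 : HasFDerivAt (fun q : ℝ × ℝ × ℝ × ℝ => q.1)
      (ContinuousLinearMap.fst ℝ ℝ (ℝ × ℝ × ℝ)) p := hasFDerivAt_fst
  have hx2 : HasFDerivAt (fun q : ℝ × ℝ × ℝ × ℝ => q.2.1)
      ((ContinuousLinearMap.fst ℝ ℝ (ℝ × ℝ)).comp
        (ContinuousLinearMap.snd ℝ ℝ (ℝ × ℝ × ℝ))) p :=
    hasFDerivAt_fst.comp p hasFDerivAt_snd
  have hx3 : HasFDerivAt (fun q : ℝ × ℝ × ℝ × ℝ => q.2.2.1)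
      ((ContinuousLinearMap.fst ℝ ℝ ℝ).comp
        ((ContinuousLinearMap.snd ℝ ℝ (ℝ × ℝ)).comp
          (ContinuousLinearMap.snd ℝ ℝ (ℝ × ℝ × ℝ)))) p :=
    hasFDerivAt_fst.comp p (hasFDerivAt_snd.comp p hasFDerivAt_snd)
  have hx4 : HasFDerivAt (fun q : ℝ × ℝ × ℝ × ℝ => q.2.2.2)
      ((ContinuousLinearMap.snd ℝ ℝ ℝ).comp
        ((ContinuousLinearMap.snd ℝ ℝ (ℝ × ℝ)).comp
          (ContinuousLinearMap.snd ℝ ℝ (ℝ × ℝ × ℝ)))) p :=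
    hasFDerivAt_snd.comp p (hasFDerivAt_snd.comp p hasFDerivAt_snd)
  have hsq : HasFDerivAt (fun q : ℝ × ℝ × ℝ × ℝ => q.2.2.1 ^ 2)
      (p.2.2.1 • ((ContinuousLinearMap.fst ℝ ℝ ℝ).comp
          ((ContinuousLinearMap.snd ℝ ℝ (ℝ × ℝ)).comp
            (ContinuousLinearMap.snd ℝ ℝ (ℝ × ℝ × ℝ)))) +
        p.2.2.1 • ((ContinuousLinearMap.fst ℝ ℝ ℝ).comp
          ((ContinuousLinearMap.snd ℝ ℝ (ℝ × ℝ)).comp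
            (ContinuousLinearMap.snd ℝ ℝ (ℝ × ℝ × ℝ))))) p := by
    exact (hx3.mul hx3).congr_of_eventuallyEq (Filter.Eventually.of_forall fun q => by simp [pow_two])
  have h1 := ((hx1.sub_const 1).neg)
  have h2 := ((hx2.mul (hx1.sub_const 1)).neg).add (hx3.mul (hx1.sub_const 2))
  have h3 := (((hx2.mul hx3).mul (hx1.sub_const 2)).add hsq).sub
      (hx4.const_mul (B * k1⁻¹))
  have h4 := hx2.mul hsq
  have hD := h1.prodMk (h2.prodMk (h3.prodMk h4))
  refine HasFDerivAt.congr_fderiv (hD.congr_of_eventuallyEq (Filter.Eventually.of_forall fun q => rfl)) ?_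
  refine ContinuousLinearMap.ext fun v => ?_
  have hcoe : (e.toContinuousLinearEquiv :
      (ℝ × ℝ × ℝ × ℝ) →L[ℝ] (ℝ × ℝ × ℝ × ℝ)) v = Jlin v := rfl
  rw [hcoe]
  simp only [hJdef, LinearMap.coe_mk, AddHom.coe_mk,
    ContinuousLinearMap.prod_apply, ContinuousLinearMap.add_apply,
    ContinuousLinearMap.sub_apply, ContinuousLinearMap.neg_apply,
    ContinuousLinearMap.smul_apply, ContinuousLinearMap.coe_comp',
    Function.comp_apply, ContinuousLinearMap.coe_fst',
    ContinuousLinearMap.coe_snd', smul_eq_mul, Prod.mk.injEq, Pi.mul_apply]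
  refine ⟨trivial, by ring, by ring, by ring⟩
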